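/- The contraction operators C_τ on harmonic functions of a 1-differential poset satisfy the semigroup law C_t(C_s(φ)) = C_{st}(φ) for 0 ≤ s, t ≤ 1, together with C_1(φ) = φ and C_0(φ) = φ_P, the Plancherel harmonic function. -/

import Mathlib

/-- A branching diagram: a graded graph with finite levels, a unique minimal
vertex `bot` of rank `0`, no maximal vertices, and every vertex of positive
rank covering some vertex. `covers u w` means `w` covers `u` (`u ⋖ w`). -/
structure BranchingDiagram where
  V : Type
  rank : V → ℕ
  covers : V → V → Prop
  rank_covers : ∀ u w, covers u w → rank w = rank u + 1
  finite_level : ∀ n : ℕ, {v : V | rank v = n}.Finite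
  bot : V
  rank_bot : rank bot = 0
  bot_unique : ∀ v, rank v = 0 → v = bot
  no_max : ∀ v, ∃ w, covers v w
  exists_pred : ∀ v, rank v ≠ 0 → ∃ u, covers u v

/-- `Γ.d u w` is the number of saturated chains (paths along covering relations)
from `u` to `w`. -/
noncomputable def BranchingDiagram.d (Γ : BranchingDiagram) (u w : Γ.V) : ℕ :=
  Set.ncard {p : List Γ.V | p.Chain' Γ.covers ∧ p.head? = some u ∧ p.getLast? = some w}

/-- A `1`-differential poset: (D1) for distinct vertices of equal rank, the number
of common lower covers equals the number of common upper covers; (D2) each vertex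
is covered by one more vertex than it covers. -/
def BranchingDiagram.IsDifferential (Γ : BranchingDiagram) : Prop :=
  (∀ u v : Γ.V, u ≠ v → Γ.rank u = Γ.rank v →
      Set.ncard {x | Γ.covers x u ∧ Γ.covers x v} =
        Set.ncard {w | Γ.covers u w ∧ Γ.covers v w}) ∧
  (∀ v : Γ.V, Set.ncard {w | Γ.covers v w} = Set.ncard {u | Γ.covers u v} + 1)

/-- The contraction `C_τ(φ)(v) = Σ_{k=0}^{n} (τ^k (1−τ)^{n−k}/(n−k)!) Σ_{|u|=k} φ(u) d(u,v)`,
where `n = |v|`. -/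
noncomputable def BranchingDiagram.contract (Γ : BranchingDiagram) (τ : ℝ)
    (φ : Γ.V → ℝ) : Γ.V → ℝ := fun v =>
  ∑ k ∈ Finset.range (Γ.rank v + 1),
    τ ^ k * (1 - τ) ^ (Γ.rank v - k) / (Γ.rank v - k).factorial *
      ∑ᶠ u ∈ {u : Γ.V | Γ.rank u = k}, φ u * (Γ.d u v : ℝ)

open scoped Classical

namespace BranchingDiagram
variable (Γ : BranchingDiagram)

/-- The set of saturated chains from `u` to `v`. -/
def ChainSet (u v : Γ.V) : Set (List Γ.V) :=
  {p : List Γ.V | p.Chain' Γ.covers ∧ p.head? = some u ∧ p.getLast? = some v}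

lemma d_eq (u v : Γ.V) : Γ.d u v = (Γ.ChainSet u v).ncard := rfl

lemma chain_rank (v : Γ.V) :
    ∀ (p : List Γ.V) (u : Γ.V), p ∈ Γ.ChainSet u v →
      Γ.rank v + 1 = Γ.rank u + p.length := by
  intro p
  induction p with
  | nil => intro u h; simp [ChainSet] at h
  | cons a q ih =>
    intro u h
    obtain ⟨hc, hh, hl⟩ := h
    simp only [List.head?_cons, Option.some.injEq] at hh
    subst hh
    cases q with
    | nil =>
      simp only [List.getLast?_singleton, Option.some.injEq] at hl
      subst hl; simp
    | cons b r =>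
      replace hc := List.isChain_cons_cons.mp hc
      have := ih b ⟨hc.2, rfl, by rwa [List.getLast?_cons_cons] at hl⟩
      have h2 := Γ.rank_covers _ _ hc.1
      simp only [List.length_cons] at *
      omega

lemma chainset_eq_rank {u v : Γ.V} (h : Γ.rank u = Γ.rank v) :
    Γ.ChainSet u v = if u = v then {[u]} else ∅ := by
  ext p
  constructor
  · intro hp
    have hlen := Γ.chain_rank v p u hp
    rw [h] at hlen
    have : p.length = 1 := by omega
    obtain ⟨a, rfl⟩ := List.length_eq_one_iff.mp this
    obtain ⟨_, hh, hl⟩ := hp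
    simp only [List.head?_cons, Option.some.injEq] at hh
    simp only [List.getLast?_singleton, Option.some.injEq] at hl
    subst hh; subst hl
    simp
  · intro hp
    split_ifs at hp with he
    · subst he
      simp only [Set.mem_singleton_iff] at hp
      subst hp
      exact ⟨List.isChain_singleton _, rfl, rfl⟩
    · exact absurd hp (Set.notMem_empty p)

lemma d_eq_rank {u v : Γ.V} (h : Γ.rank u = Γ.rank v) :
    Γ.d u v = if u = v then 1 else 0 := by
  rw [d_eq, chainset_eq_rank Γ h]
  split_ifs <;> simp

lemma chainset_eq_biUnion {u v : Γ.V} (h : Γ.rank u < Γ.rank v) :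
    Γ.ChainSet u v = ⋃ x ∈ {x | Γ.covers u x}, (List.cons u) '' Γ.ChainSet x v := by
  ext p
  simp only [Set.mem_iUnion, Set.mem_setOf_eq, Set.mem_image, exists_prop]
  constructor
  · intro hp
    have hlen := Γ.chain_rank v p u hp
    obtain ⟨hc, hh, hl⟩ := hp
    match p, hlen with
    | a :: b :: r, _ =>
      simp only [List.head?_cons, Option.some.injEq] at hh
      subst hh
      replace hc := List.isChain_cons_cons.mp hc
      exact ⟨b, hc.1, b :: r, ⟨hc.2, rfl, by rwa [List.getLast?_cons_cons] at hl⟩, rfl⟩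
    | [a], hlen => simp only [List.length_cons, List.length_nil] at hlen; omega
  · rintro ⟨x, hux, q, ⟨hc, hh, hl⟩, rfl⟩
    match q, hh with
    | b :: r, hh =>
      simp only [List.head?_cons, Option.some.injEq] at hh
      subst hh
      exact ⟨List.isChain_cons_cons.mpr ⟨hux, hc⟩, rfl, by rwa [List.getLast?_cons_cons]⟩

lemma covers_finite (u : Γ.V) : {x | Γ.covers u x}.Finite :=
  (Γ.finite_level (Γ.rank u + 1)).subset (fun x hx => Γ.rank_covers u x hx)

lemma chainset_finite_aux : ∀ (m : ℕ) (u v : Γ.V), Γ.rank v = Γ.rank u + m →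
    (Γ.ChainSet u v).Finite := by
  intro m
  induction m with
  | zero =>
    intro u v h
    rw [Γ.chainset_eq_rank h.symm]
    split_ifs <;> simp
  | succ m ih =>
    intro u v h
    rw [Γ.chainset_eq_biUnion (by omega)]
    apply Set.Finite.biUnion (Γ.covers_finite u)
    intro x hx
    exact ((ih x v (by rw [h, Γ.rank_covers u x hx]; ring)).image _)

lemma chainset_finite (u v : Γ.V) : (Γ.ChainSet u v).Finite := by
  rcases le_or_gt (Γ.rank u) (Γ.rank v) with h | h
  · exact Γ.chainset_finite_aux (Γ.rank v - Γ.rank u) u v (by omega)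
  · have : Γ.ChainSet u v = ∅ := by
      ext p
      simp only [Set.mem_empty_iff_false, iff_false]
      intro hp
      have := Γ.chain_rank v p u hp
      have : 1 ≤ p.length := by
        rcases p with _ | ⟨a, q⟩
        · exact absurd hp.2.1 (by simp)
        · simp
      omega
    rw [this]; exact Set.finite_empty

lemma d_rec {u v : Γ.V} (h : Γ.rank u < Γ.rank v) :
    Γ.d u v = ∑ x ∈ (Γ.covers_finite u).toFinset, Γ.d x v := by
  rw [d_eq, Set.ncard_eq_toFinset_card _ (Γ.chainset_finite u v)]
  have hfs : (Γ.chainset_finite u v).toFinset =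
      (Γ.covers_finite u).toFinset.biUnion
        (fun x => ((Γ.chainset_finite x v).toFinset).image (List.cons u)) := by
    ext p
    simp only [Set.Finite.mem_toFinset, Finset.mem_biUnion, Finset.mem_image,
      Γ.chainset_eq_biUnion h, Set.mem_iUnion, Set.mem_setOf_eq, Set.mem_image, exists_prop]
  rw [hfs, Finset.card_biUnion]
  · apply Finset.sum_congr rfl
    intro x _
    rw [Finset.card_image_of_injective _ (fun a b => by simp),
      d_eq, Set.ncard_eq_toFinset_card _ (Γ.chainset_finite x v)]
  · intro x _ y _ hxy
    simp only [Finset.disjoint_left, Finset.mem_image, Set.Finite.mem_toFinset]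
    rintro p ⟨q, hq, rfl⟩ ⟨r, hr, he⟩
    simp only [List.cons.injEq] at he
    apply hxy
    have h1 := hq.2.1
    have h2 := hr.2.1
    rw [← he.2] at h1
    rw [h1] at h2
    exact Option.some.inj h2

/-- The finite set of vertices of rank `k`. -/
noncomputable def levelFinset (k : ℕ) : Finset Γ.V := (Γ.finite_level k).toFinset

lemma mem_levelFinset {k : ℕ} {u : Γ.V} : u ∈ Γ.levelFinset k ↔ Γ.rank u = k :=
  Set.Finite.mem_toFinset _

lemma d_decomp_aux (k : ℕ) (v : Γ.V) (hk : k ≤ Γ.rank v) :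
    ∀ (m : ℕ) (u : Γ.V), Γ.rank u + m = k →
      Γ.d u v = ∑ x ∈ Γ.levelFinset k, Γ.d u x * Γ.d x v := by
  intro m
  induction m with
  | zero =>
    intro u hu
    rw [Finset.sum_eq_single u]
    · rw [Γ.d_eq_rank (by omega : Γ.rank u = Γ.rank u), if_pos rfl, one_mul]
    · intro x hx hne
      rw [Γ.d_eq_rank (by rw [Γ.mem_levelFinset.mp hx]; omega),
        if_neg (fun he => hne he.symm), zero_mul]
    · intro hu'
      exact absurd (Γ.mem_levelFinset.mpr (by omega)) hu'
  | succ m ih =>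
    intro u hu
    rw [Γ.d_rec (by omega : Γ.rank u < Γ.rank v)]
    have step : ∀ y ∈ (Γ.covers_finite u).toFinset,
        Γ.d y v = ∑ x ∈ Γ.levelFinset k, Γ.d y x * Γ.d x v := by
      intro y hy
      exact ih y (by rw [Γ.rank_covers u y ((Γ.covers_finite u).mem_toFinset.mp hy)]; omega)
    rw [Finset.sum_congr rfl step, Finset.sum_comm]
    apply Finset.sum_congr rfl
    intro x hx
    rw [← Finset.sum_mul]
    congr 1
    rw [Γ.d_rec (by rw [Γ.mem_levelFinset.mp hx]; omega)]

lemma d_decomp {k : ℕ} {u v : Γ.V} (hu : Γ.rank u ≤ k) (hv : k ≤ Γ.rank v) :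
    Γ.d u v = ∑ x ∈ Γ.levelFinset k, Γ.d u x * Γ.d x v :=
  Γ.d_decomp_aux k v hv (k - Γ.rank u) u (by omega)

lemma contract_apply (τ : ℝ) (φ : Γ.V → ℝ) (v : Γ.V) :
    Γ.contract τ φ v = ∑ k ∈ Finset.range (Γ.rank v + 1),
      τ ^ k * (1 - τ) ^ (Γ.rank v - k) / (Γ.rank v - k).factorial *
        ∑ u ∈ Γ.levelFinset k, φ u * (Γ.d u v : ℝ) := by
  apply Finset.sum_congr rfl
  intro k _
  congr 1
  rw [← (Γ.finite_level k).coe_toFinset, finsum_mem_coe_finset]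
  rfl

lemma levelFinset_zero : Γ.levelFinset 0 = {Γ.bot} := by
  ext u
  simp only [mem_levelFinset, Finset.mem_singleton]
  exact ⟨fun h => Γ.bot_unique u h, fun h => h ▸ Γ.rank_bot⟩

end BranchingDiagram

open Finset in
lemma binom_aux (s t : ℝ) {j n : ℕ} (hj : j ≤ n) :
    ∑ k ∈ Finset.Icc j n, t ^ k * (1 - t) ^ (n - k) / (n - k).factorial *
        (s ^ j * (1 - s) ^ (k - j) / (k - j).factorial) =
      (s * t) ^ j * (1 - s * t) ^ (n - j) / (n - j).factorial := by
  have hMn : n + 1 - j = (n - j) + 1 := by omega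
  rw [← Finset.Ico_add_one_right_eq_Icc, Finset.sum_Ico_eq_sum_range, hMn]
  set M := n - j with hM
  have hstep : ∀ i ∈ Finset.range (M + 1),
      t ^ (j + i) * (1 - t) ^ (n - (j + i)) / (n - (j + i)).factorial *
        (s ^ j * (1 - s) ^ (j + i - j) / (j + i - j).factorial) =
      (s * t) ^ j * ((t * (1 - s)) ^ i * (1 - t) ^ (M - i) * ((M.choose i : ℝ)) / M.factorial) := by
    intro i hi
    rw [Finset.mem_range] at hi
    have hiM : i ≤ M := by omega
    have h1 : n - (j + i) = M - i := by omega
    have h2 : j + i - j = i := by omega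
    rw [h1, h2]
    have hc : ((M.choose i : ℝ)) * i.factorial * (M - i).factorial = M.factorial := by
      exact_mod_cast congrArg (Nat.cast : ℕ → ℝ) (Nat.choose_mul_factorial_mul_factorial hiM)
    have f1 : (i.factorial : ℝ) ≠ 0 := Nat.cast_ne_zero.mpr i.factorial_ne_zero
    have f2 : ((M - i).factorial : ℝ) ≠ 0 := Nat.cast_ne_zero.mpr (M - i).factorial_ne_zero
    have f3 : (M.factorial : ℝ) ≠ 0 := Nat.cast_ne_zero.mpr M.factorial_ne_zero
    field_simp
    rw [← hc, pow_add, mul_pow, mul_pow]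
    ring
  have hp : (1 - s * t) = (t * (1 - s)) + (1 - t) := by ring
  rw [Finset.sum_congr rfl hstep, ← Finset.mul_sum, hp, add_pow, mul_div_assoc,
    Finset.sum_div]

/-- Semigroup law for contractions on a `1`-differential poset:
`C_t(C_s(φ)) = C_{st}(φ)`, `C_1(φ) = φ`, and `C_0(φ) = φ_P` (the Plancherel
harmonic function). -/
theorem stmt_13 (Γ : BranchingDiagram) (hΓ : Γ.IsDifferential) (φ : Γ.V → ℝ)
    (hpos : ∀ v, 0 ≤ φ v) (hnorm : φ Γ.bot = 1)
    (hharm : ∀ u, φ u = ∑ᶠ w ∈ {w | Γ.covers u w}, φ w)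
    (s t : ℝ) (hs0 : 0 ≤ s) (hs1 : s ≤ 1) (ht0 : 0 ≤ t) (ht1 : t ≤ 1) :
    Γ.contract t (Γ.contract s φ) = Γ.contract (s * t) φ ∧
    Γ.contract 1 φ = φ ∧
    Γ.contract 0 φ = fun v => (Γ.d Γ.bot v : ℝ) / (Γ.rank v).factorial := by
  refine ⟨?_, ?_, ?_⟩
  · -- semigroup law
    funext v
    set n := Γ.rank v with hn
    -- inner expansion of `contract s φ` on level `k`
    have hCs : ∀ (k : ℕ), ∀ u ∈ Γ.levelFinset k, Γ.contract s φ u =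
        ∑ j ∈ Finset.range (k + 1),
          s ^ j * (1 - s) ^ (k - j) / (k - j).factorial *
            ∑ w ∈ Γ.levelFinset j, φ w * (Γ.d w u : ℝ) := by
      intro k u hu
      rw [Γ.contract_apply, Γ.mem_levelFinset.mp hu]
    have key : ∀ k ∈ Finset.range (n + 1), ∀ j ∈ Finset.range (k + 1),
        ∑ u ∈ Γ.levelFinset k, (∑ w ∈ Γ.levelFinset j, φ w * (Γ.d w u : ℝ)) * (Γ.d u v : ℝ) =
          ∑ w ∈ Γ.levelFinset j, φ w * (Γ.d w v : ℝ) := by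
      intro k hk j hj
      rw [Finset.mem_range] at hk hj
      simp only [Finset.sum_mul]
      rw [Finset.sum_comm]
      refine Finset.sum_congr rfl (fun w hw => ?_)
      have hd : (Γ.d w v : ℝ) = ∑ u ∈ Γ.levelFinset k, (Γ.d w u : ℝ) * (Γ.d u v : ℝ) := by
        rw [Γ.d_decomp (k := k) (by rw [Γ.mem_levelFinset.mp hw]; omega)
          (by omega : k ≤ Γ.rank v)]
        push_cast
        rfl
      rw [hd, Finset.mul_sum]
      exact Finset.sum_congr rfl (fun u _ => by ring)
    have inner : ∀ k ∈ Finset.range (n + 1),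
        ∑ u ∈ Γ.levelFinset k, (∑ j ∈ Finset.range (k + 1),
            s ^ j * (1 - s) ^ (k - j) / (k - j).factorial *
              ∑ w ∈ Γ.levelFinset j, φ w * (Γ.d w u : ℝ)) * (Γ.d u v : ℝ) =
          ∑ j ∈ Finset.range (k + 1),
            s ^ j * (1 - s) ^ (k - j) / (k - j).factorial *
              ∑ w ∈ Γ.levelFinset j, φ w * (Γ.d w v : ℝ) := by
      intro k hk
      simp only [Finset.sum_mul]
      rw [Finset.sum_comm]
      refine Finset.sum_congr rfl (fun j hj => ?_)
      simp only [mul_assoc]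
      rw [← Finset.mul_sum]
      congr 1
      exact key k hk j hj
    calc Γ.contract t (Γ.contract s φ) v
        = ∑ k ∈ Finset.range (n + 1), ∑ j ∈ Finset.range (k + 1),
            t ^ k * (1 - t) ^ (n - k) / (n - k).factorial *
              (s ^ j * (1 - s) ^ (k - j) / (k - j).factorial) *
                ∑ w ∈ Γ.levelFinset j, φ w * (Γ.d w v : ℝ) := by
          rw [Γ.contract_apply]
          refine Finset.sum_congr rfl (fun k hk => ?_)
          rw [Finset.sum_congr rfl (fun u hu => by rw [hCs k u hu]), inner k hk,
            Finset.mul_sum]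
          exact Finset.sum_congr rfl (fun j _ => by ring)
      _ = ∑ j ∈ Finset.range (n + 1), (∑ k ∈ Finset.Icc j n,
            t ^ k * (1 - t) ^ (n - k) / (n - k).factorial *
              (s ^ j * (1 - s) ^ (k - j) / (k - j).factorial)) *
                ∑ w ∈ Γ.levelFinset j, φ w * (Γ.d w v : ℝ) := by
          simp only [← Nat.Ico_zero_eq_range, ← Finset.Ico_add_one_right_eq_Icc, Finset.sum_mul]
          exact (Finset.sum_Ico_Ico_comm 0 (n + 1) _).symm
      _ = Γ.contract (s * t) φ v := by
          rw [Γ.contract_apply]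
          refine Finset.sum_congr rfl (fun j hj => ?_)
          rw [Finset.mem_range] at hj
          rw [binom_aux s t (by omega : j ≤ n)]
  · -- C_1 = φ
    funext v
    rw [Γ.contract_apply]
    rw [Finset.sum_eq_single (Γ.rank v)]
    · rw [Finset.sum_eq_single v]
      · rw [Γ.d_eq_rank rfl, if_pos rfl]
        simp
      · intro u hu hne
        rw [Γ.d_eq_rank (Γ.mem_levelFinset.mp hu), if_neg hne]
        simp
      · intro hv
        exact absurd (Γ.mem_levelFinset.mpr rfl) hv
    · intro k hk hne
      rw [Finset.mem_range] at hk
      rw [show (1 : ℝ) - 1 = 0 from by ring, zero_pow (by omega : Γ.rank v - k ≠ 0)]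
      simp
    · intro h
      exact absurd (Finset.self_mem_range_succ _) h
  · -- C_0 = Plancherel
    funext v
    rw [Γ.contract_apply]
    rw [Finset.sum_eq_single 0]
    · rw [Γ.levelFinset_zero, Finset.sum_singleton, hnorm]
      simp only [pow_zero, Nat.sub_zero, one_mul, sub_zero, one_pow]
      rw [div_mul_eq_mul_div, one_mul]
    · intro k hk hne
      rw [zero_pow hne]
      simp
    · intro h
      exact absurd (Finset.mem_range.mpr (by omega)) h
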